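/- Let (X, d, μ) be an mm-space with total measure m := μ(X). For any r > 0, there exists a Borel subset X₀ ⊆ X such that μ(X \ (X₀)_{+r}) = α_X(r) and μ(X₀) ≥ m/2. -/
import Mathlib


open MeasureTheory Metric Set
open scoped ENNReal

/-- The partial diameter `diam(ν, a)`: the infimum of the diameters of Borel subsets of
measure at least `a`. -/
noncomputable def partialDiam {Y : Type*} [MetricSpace Y] [MeasurableSpace Y]
    (ν : Measure Y) (a : ℝ) : ℝ≥0∞ :=
  ⨅ (s : Set Y) (_ : MeasurableSet s) (_ : ENNReal.ofReal a ≤ ν s), EMetric.diam s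

/-- The observable diameter `diam(X →Lip₁ Y, a)`: the supremum over all `1`-Lipschitz maps
`f : X → Y` of the partial diameter of the push-forward measure. -/
noncomputable def obsDiam (Y : Type*) [MetricSpace Y] [MeasurableSpace Y]
    {X : Type*} [MetricSpace X] [MeasurableSpace X] (μ : Measure X) (a : ℝ) : ℝ≥0∞ :=
  ⨆ (f : X → Y) (_ : LipschitzWith 1 f), partialDiam (μ.map f) a

/-- The set of pre-Lévy means of `f`: points `a` with `f₊μ(-∞,a] ≥ m/2` and `f₊μ[a,∞) ≥ m/2`. -/
def preLevyMeans {X : Type*} [MeasurableSpace X] (μ : Measure X) (f : X → ℝ) : Set ℝ :=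
  {a : ℝ | μ Set.univ / 2 ≤ (μ.map f) (Set.Iic a) ∧ μ Set.univ / 2 ≤ (μ.map f) (Set.Ici a)}

/-- The Lévy mean `m_f := (min A_f + max A_f) / 2`. -/
noncomputable def levyMean {X : Type*} [MeasurableSpace X] (μ : Measure X) (f : X → ℝ) : ℝ :=
  (sInf (preLevyMeans μ f) + sSup (preLevyMeans μ f)) / 2

/-- The Lévy radius `LeRad(X; -κ)`. -/
noncomputable def leRad {X : Type*} [MetricSpace X] [MeasurableSpace X]
    (μ : Measure X) (κ : ℝ) : ℝ :=
  sInf {ρ : ℝ | 0 < ρ ∧ ∀ f : X → ℝ, LipschitzWith 1 f →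
    μ {x | ρ ≤ |f x - levyMean μ f|} ≤ ENNReal.ofReal κ}

/-- The concentration function `α_X(r)`, where `A_{+r}` is the open `r`-thickening. -/
noncomputable def concFn {X : Type*} [MetricSpace X] [MeasurableSpace X]
    (μ : Measure X) (r : ℝ) : ℝ :=
  sSup {v : ℝ | ∃ A : Set X, MeasurableSet A ∧ μ Set.univ / 2 ≤ μ A ∧
    v = (μ (Metric.thickening r A)ᶜ).toReal}

/-- The distance between two subsets: `inf {dist a b | a ∈ A, b ∈ B}`. -/
noncomputable def setDist {X : Type*} [MetricSpace X] (A B : Set X) : ℝ :=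
  sInf {d : ℝ | ∃ a ∈ A, ∃ b ∈ B, d = dist a b}

/-- The separation distance `Sep(X; κ₀, κ₁)`. -/
noncomputable def sep2 {X : Type*} [MetricSpace X] [MeasurableSpace X] (μ : Measure X)
    (κ₀ κ₁ : ℝ) : ℝ :=
  sSup {v : ℝ | ∃ A B : Set X, MeasurableSet A ∧ MeasurableSet B ∧
    ENNReal.ofReal κ₀ ≤ μ A ∧ ENNReal.ofReal κ₁ ≤ μ B ∧ v = setDist A B}

/-- The support of a measure on a metric space: points all of whose balls have
positive measure. -/
def measureSupport {X : Type*} [MetricSpace X] [MeasurableSpace X] (μ : Measure X) : Set X :=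
  {x : X | ∀ r : ℝ, 0 < r → 0 < μ (Metric.ball x r)}

/-- `V_p(f) = (∬ d_Y(f(x), f(x'))^p dμ dμ)^{1/p}`. -/
noncomputable def lipVar {X Y : Type*} [MeasurableSpace X] [MetricSpace Y]
    (μ : Measure X) (f : X → Y) (p : ℝ) : ℝ≥0∞ :=
  (∫⁻ x, ∫⁻ x', edist (f x) (f x') ^ p ∂μ ∂μ) ^ (1 / p)

/-- For any `r > 0` there is a Borel set `X₀` with `μ(X₀) ≥ m/2` realizing
the concentration function: `μ(X \ (X₀)_{+r}) = α_X(r)`. -/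
theorem exists_set_realizing_concFn {X : Type*} [MetricSpace X] [CompleteSpace X]
    [TopologicalSpace.SeparableSpace X] [MeasurableSpace X] [BorelSpace X]
    (μ : Measure X) [IsFiniteMeasure μ]
    (r : ℝ) (hr : 0 < r) :
    ∃ X₀ : Set X, MeasurableSet X₀ ∧ μ Set.univ / 2 ≤ μ X₀ ∧
      (μ (Metric.thickening r X₀)ᶜ).toReal = concFn μ r := by
  classical
  set S : Set ℝ := {v : ℝ | ∃ A : Set X, MeasurableSet A ∧ μ Set.univ / 2 ≤ μ A ∧
    v = (μ (Metric.thickening r A)ᶜ).toReal} with hS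
  rw [show concFn μ r = sSup S from rfl]
  have hmemS : ∀ (A : Set X), MeasurableSet A → μ Set.univ / 2 ≤ μ A →
      (μ (Metric.thickening r A)ᶜ).toReal ∈ S := fun A h1 h2 => ⟨A, h1, h2, rfl⟩
  have hSne : S.Nonempty := ⟨_, hmemS Set.univ MeasurableSet.univ ENNReal.half_le_self⟩
  set m' := (μ Set.univ).toReal with hm'
  have hbdd' : ∀ v ∈ S, v ≤ m' := by
    rintro v ⟨A, -, -, rfl⟩
    exact ENNReal.toReal_mono (measure_ne_top μ _) (measure_mono (Set.subset_univ _))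
  have hbdd : BddAbove S := ⟨m', hbdd'⟩
  set α := sSup S with hα
  have hαle : ∀ v ∈ S, v ≤ α := fun v hv => le_csSup hbdd hv
  have hαm' : α ≤ m' := csSup_le hSne hbdd'
  rcases isEmpty_or_nonempty X with hX | hX
  · have h0 : ∀ s : Set X, μ s = 0 := fun s => by
      simp [Set.eq_empty_of_isEmpty s]
    have hSeq : S = {0} := by
      apply Set.eq_singleton_iff_unique_mem.mpr
      constructor
      · exact ⟨∅, MeasurableSet.empty, by simp [h0], by simp [h0]⟩
      · rintro v ⟨A, -, -, rfl⟩; simp [h0]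
    have hαz : α = (0:ℝ) := by rw [hα, hSeq, csSup_singleton]
    refine ⟨∅, MeasurableSet.empty, by simp [h0], ?_⟩
    rw [hαz]
    simp [h0]
  -- main case
  have hseq : ∀ n : ℕ, ∃ A : Set X, IsClosed A ∧ μ Set.univ / 2 ≤ μ A ∧
      α - 1/(n+1) ≤ (μ (Metric.thickening r A)ᶜ).toReal := by
    intro n
    have hlt : α - 1/((n:ℝ)+1) < α := by
      have h1 : (0:ℝ) < 1/((n:ℝ)+1) := by positivity
      linarith
    obtain ⟨v, hv, hvlt⟩ := exists_lt_of_lt_csSup hSne hlt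
    obtain ⟨A, hAm, hAμ, rfl⟩ := hv
    refine ⟨closure A, isClosed_closure, hAμ.trans (measure_mono subset_closure), ?_⟩
    rw [Metric.thickening_closure]
    exact hvlt.le
  choose A0 hA0c hA0μ hA0v using hseq
  set u := TopologicalSpace.denseSeq X with hu'
  have hu : DenseRange u := TopologicalSpace.denseRange_denseSeq X
  set c : ℕ → (ℕ × ℕ → Bool) := fun n p =>
    decide (A0 n ∩ Metric.ball (u p.1) (1/((p.2:ℝ)+1))).Nonempty with hc
  obtain ⟨L, -, φ, hφ, hLconv⟩ := isCompact_univ.tendsto_subseq (x := c) (fun n => Set.mem_univ _)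
  have hev : ∀ p : ℕ × ℕ, ∀ᶠ j in Filter.atTop, c (φ j) p = L p := by
    intro p
    have h1 : Filter.Tendsto (fun j => c (φ j) p) Filter.atTop (nhds (L p)) :=
      ((continuous_apply p).tendsto L).comp hLconv
    rw [nhds_discrete, Filter.tendsto_pure] at h1
    exact h1
  set B : ℕ → Set X := fun j => A0 (φ j) with hB
  have hBc : ∀ j, IsClosed (B j) := fun j => hA0c _
  have hBμ : ∀ j, μ Set.univ / 2 ≤ μ (B j) := fun j => hA0μ _
  have hBv : ∀ j : ℕ, α - 1/((j:ℝ)+1) ≤ (μ (Metric.thickening r (B j))ᶜ).toReal := by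
    intro j
    refine le_trans ?_ (hA0v (φ j))
    have h1 : 1/((φ j:ℝ)+1) ≤ 1/((j:ℝ)+1) := by
      apply one_div_le_one_div_of_le (by positivity)
      have := hφ.le_apply (x := j)
      exact_mod_cast Nat.succ_le_succ this
    linarith
  set C : ℕ → Set X := fun N => closure (⋃ j ∈ Set.Ici N, B j) with hC
  set X₀ : Set X := ⋂ N, C N with hX₀
  have hCclosed : ∀ N, IsClosed (C N) := fun N => isClosed_closure
  have hCanti : Antitone C := fun a b hab =>
    closure_mono (Set.biUnion_subset_biUnion_left (fun j hj => le_trans hab hj))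
  have hX₀closed : IsClosed X₀ := isClosed_iInter hCclosed
  have hX₀m : MeasurableSet X₀ := hX₀closed.measurableSet
  have hX₀μ : μ Set.univ / 2 ≤ μ X₀ := by
    have ht := MeasureTheory.tendsto_measure_iInter_atTop
      (fun N => (hCclosed N).measurableSet.nullMeasurableSet) hCanti ⟨0, measure_ne_top μ _⟩
    refine ge_of_tendsto ht (Filter.Eventually.of_forall fun N => ?_)
    refine le_trans (hBμ N) (measure_mono ?_)
    exact (Set.subset_biUnion_of_mem (Set.mem_Ici.mpr le_rfl)).trans subset_closure
  have happrox : ∀ a ∈ X₀, ∀ ε : ℝ, 0 < ε →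
      ∀ᶠ j in Filter.atTop, (B j ∩ Metric.ball a ε).Nonempty := by
    intro a ha ε hε
    obtain ⟨k, hk⟩ := exists_nat_one_div_lt (show (0:ℝ) < ε/2 by linarith)
    have hk0 : (0:ℝ) < 1/((k:ℝ)+1) := by positivity
    obtain ⟨q, hq⟩ := hu.exists_dist_lt a (show (0:ℝ) < 1/((k:ℝ)+1)/2 by positivity)
    have hfreq : ∃ᶠ j in Filter.atTop,
        (A0 (φ j) ∩ Metric.ball (u q) (1/((k:ℝ)+1))).Nonempty := by
      rw [Filter.frequently_atTop]
      intro N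
      have haC : a ∈ C N := Set.mem_iInter.mp ha N
      rw [Metric.mem_closure_iff] at haC
      obtain ⟨b, hb, hab⟩ := haC (1/((k:ℝ)+1)/2) (by positivity)
      simp only [Set.mem_iUnion, exists_prop] at hb
      obtain ⟨j, hjN, hbj⟩ := hb
      refine ⟨j, hjN, b, hbj, ?_⟩
      rw [Metric.mem_ball]
      have h2 := dist_triangle b a (u q)
      rw [dist_comm] at hab
      linarith
    have hL : L (q, k) = true := by
      obtain ⟨j, hj1, hj2⟩ := (hfreq.and_eventually (hev (q, k))).exists
      rw [← hj2]
      exact decide_eq_true hj1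
    have hevT : ∀ᶠ j in Filter.atTop,
        (B j ∩ Metric.ball (u q) (1/((k:ℝ)+1))).Nonempty := by
      filter_upwards [hev (q, k)] with j hj
      rw [hL] at hj
      exact of_decide_eq_true hj
    filter_upwards [hevT] with j hj
    obtain ⟨b, hbB, hbq⟩ := hj
    refine ⟨b, hbB, ?_⟩
    rw [Metric.mem_ball] at hbq ⊢
    have h3 := dist_triangle b (u q) a
    rw [dist_comm a (u q)] at hq
    linarith
  set G : ℕ → Set X := fun N => ⋂ j ∈ Set.Ici N, Metric.thickening r (B j) with hG
  have hGmono : Monotone G := fun a b hab =>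
    Set.biInter_subset_biInter_left (fun j hj => le_trans hab hj)
  have hsub : Metric.thickening r X₀ ⊆ ⋃ N, G N := by
    intro x hx
    rw [Metric.mem_thickening_iff] at hx
    obtain ⟨a, haX₀, hxa⟩ := hx
    have hε : 0 < r - dist x a := by linarith
    obtain ⟨N, hN⟩ := Filter.eventually_atTop.mp (happrox a haX₀ _ hε)
    refine Set.mem_iUnion.mpr ⟨N, ?_⟩
    refine Set.mem_biInter fun j hj => ?_
    obtain ⟨b, hbB, hba⟩ := hN j hj
    rw [Metric.mem_thickening_iff]
    refine ⟨b, hbB, ?_⟩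
    rw [Metric.mem_ball] at hba
    have h4 := dist_triangle x a b
    rw [dist_comm b a] at hba
    linarith
  have hGle : ∀ N, (μ (G N)).toReal ≤ m' - α := by
    intro N
    by_contra hcon
    push_neg at hcon
    obtain ⟨j0, hj0⟩ := exists_nat_one_div_lt (show (0:ℝ) < (μ (G N)).toReal - (m' - α) by linarith)
    set j := max N j0 with hj
    have hjN : j ∈ Set.Ici N := Set.mem_Ici.mpr (le_max_left _ _)
    have hGsub : G N ⊆ Metric.thickening r (B j) := Set.biInter_subset_of_mem hjN
    have h5 : (μ (G N)).toReal ≤ (μ (Metric.thickening r (B j))).toReal :=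
      ENNReal.toReal_mono (measure_ne_top μ _) (measure_mono hGsub)
    have h6 : (μ (Metric.thickening r (B j))).toReal
        + (μ (Metric.thickening r (B j))ᶜ).toReal = m' := by
      rw [← ENNReal.toReal_add (measure_ne_top μ _) (measure_ne_top μ _),
        measure_add_measure_compl (isOpen_thickening.measurableSet)]
    have h7 := hBv j
    have h8 : 1/((j:ℝ)+1) ≤ 1/((j0:ℝ)+1) := by
      apply one_div_le_one_div_of_le (by positivity)
      have : (j0:ℕ) ≤ j := le_max_right _ _
      exact_mod_cast Nat.succ_le_succ this
    linarith
  have hGle' : ∀ N, μ (G N) ≤ ENNReal.ofReal (m' - α) := by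
    intro N
    rw [← ENNReal.ofReal_toReal (measure_ne_top μ (G N))]
    exact ENNReal.ofReal_le_ofReal (hGle N)
  have hUle : μ (⋃ N, G N) ≤ ENNReal.ofReal (m' - α) := by
    rw [hGmono.directed_le.measure_iUnion]
    exact iSup_le hGle'
  have hthick : μ (Metric.thickening r X₀) ≤ ENNReal.ofReal (m' - α) :=
    (measure_mono hsub).trans hUle
  have hα0 : 0 ≤ α := by
    obtain ⟨v, hv⟩ := hSne
    have h9 := hαle v hv
    obtain ⟨A, -, -, rfl⟩ := hv
    exact le_trans ENNReal.toReal_nonneg h9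
  have h1 : (μ (Metric.thickening r X₀)).toReal ≤ m' - α := by
    have h9 := ENNReal.toReal_mono ENNReal.ofReal_ne_top hthick
    rwa [ENNReal.toReal_ofReal (by linarith)] at h9
  have hadd : (μ (Metric.thickening r X₀)).toReal + (μ (Metric.thickening r X₀)ᶜ).toReal = m' := by
    rw [← ENNReal.toReal_add (measure_ne_top μ _) (measure_ne_top μ _),
      measure_add_measure_compl (isOpen_thickening.measurableSet)]
  have hle : (μ (Metric.thickening r X₀)ᶜ).toReal ≤ α := hαle _ (hmemS X₀ hX₀m hX₀μ)
  exact ⟨X₀, hX₀m, hX₀μ, by linarith⟩
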